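/- With the hypotheses and notation above (Ric(M) ≥ n-1, D ⊂ M with first Dirichlet eigenvalue λ and eigenfunction u, u* its decreasing rearrangement, v the radial first eigenfunction of the geodesic ball B_{θ₁(λ)} ⊂ S^n with the same eigenvalue, v*(A(θ)) = v(θ)): if v is normalized so that v*(0) = u*(0), then u*(s) ≥ v*(s) for all s ∈ [0, A(θ₁)]. -/

import Mathlib

open MeasureTheory Set
open Filter

/-- Absolute continuity of a real function on `[a,b]`, expressed through the
(equivalent) integral representation by an integrable density. -/
def ACOn (F : ℝ → ℝ) (a b : ℝ) : Prop :=
  ∃ f : ℝ → ℝ, IntegrableOn f (Icc a b) ∧ ∀ x ∈ Icc a b, F x = F a + ∫ t in a..x, f t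

lemma ld_aux (f : ℝ → ℝ) (hf : Integrable f) :
    ∀ᵐ x, HasDerivAt (fun y => ∫ t in (0:ℝ)..y, f t) (f x) x := by
  filter_upwards [IsUnifLocDoublingMeasure.ae_tendsto_average_norm_sub (μ := volume)
    hf.locallyIntegrable 1] with x hx
  have hA : Tendsto (fun r => ⨍ y in Metric.closedBall x r, ‖f y - f x‖)
      (nhdsWithin 0 (Ioi 0)) (nhds 0) := by
    refine hx (fun _ => x) id tendsto_id ?_
    filter_upwards [self_mem_nhdsWithin] with r (hr : r ∈ Ioi 0)
    exact Metric.mem_closedBall_self (by simp only [id_eq]; have := mem_Ioi.mp hr; linarith)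
  rw [hasDerivAt_iff_isLittleO, Asymptotics.isLittleO_iff]
  intro c hc
  have hmem := hA (Iio_mem_nhds (half_pos hc))
  rw [mem_map, Metric.mem_nhdsWithin_iff] at hmem
  obtain ⟨ε, hε, hball⟩ := hmem
  filter_upwards [Metric.ball_mem_nhds x hε] with y hy
  rcases eq_or_ne y x with rfl | hne
  · simp
  set r : ℝ := |y - x| with hr
  have hr0 : 0 < r := abs_pos.mpr (sub_ne_zero.mpr hne)
  have hrε : r < ε := by
    have := Metric.mem_ball.mp hy
    rw [Real.dist_eq] at this
    simpa [hr, abs_sub_comm] using this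
  have hAr : (⨍ z in Metric.closedBall x r, ‖f z - f x‖) < c/2 := by
    have : r ∈ Metric.ball (0:ℝ) ε ∩ Ioi 0 := by
      constructor
      · rw [Metric.mem_ball, Real.dist_eq]; simpa [abs_of_pos hr0] using hrε
      · exact hr0
    exact hball this
  have key : (fun y => ∫ t in (0:ℝ)..y, f t) y - (fun y => ∫ t in (0:ℝ)..y, f t) x
      - (y - x) • f x = ∫ t in x..y, (f t - f x) := by
    simp only
    rw [intervalIntegral.integral_sub (hf.intervalIntegrable)
      (intervalIntegrable_const), intervalIntegral.integral_interval_sub_left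
      (hf.intervalIntegrable) (hf.intervalIntegrable), intervalIntegral.integral_const]
  rw [key]
  have hsub : Set.uIoc x y ⊆ Metric.closedBall x r := by
    rw [Real.closedBall_eq_Icc]
    rcases le_total x y with h | h
    · rw [uIoc_of_le h]
      have : r = y - x := abs_of_nonneg (by linarith)
      intro t ht
      simp only [mem_Ioc] at ht
      refine mem_Icc.mpr ⟨by linarith [ht.1, ht.2], by linarith [ht.1, ht.2]⟩
    · rw [uIoc_of_ge h]
      have : r = x - y := by rw [hr, abs_of_nonpos (by linarith)]; ring
      intro t ht
      simp only [mem_Ioc] at ht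
      refine mem_Icc.mpr ⟨by linarith [ht.1, ht.2], by linarith [ht.1, ht.2]⟩
  have hint : IntegrableOn (fun t => ‖f t - f x‖) (Metric.closedBall x r) :=
    (hf.integrableOn.sub (integrableOn_const measure_closedBall_lt_top.ne)).norm
  have step1 : ‖∫ t in x..y, (f t - f x)‖ ≤ ∫ t in Set.uIoc x y, ‖f t - f x‖ :=
    intervalIntegral.norm_integral_le_integral_norm_uIoc
  have step2 : (∫ t in Set.uIoc x y, ‖f t - f x‖) ≤ ∫ t in Metric.closedBall x r, ‖f t - f x‖ := by
    apply setIntegral_mono_set hint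
    · filter_upwards with t using norm_nonneg _
    · exact HasSubset.Subset.eventuallyLE hsub
  have hvol : (volume (Metric.closedBall x r)).toReal = 2 * r := by
    rw [Real.volume_closedBall]
    rw [ENNReal.toReal_ofReal (by linarith)]
  have step3 : (∫ t in Metric.closedBall x r, ‖f t - f x‖)
      = (2 * r) * ⨍ z in Metric.closedBall x r, ‖f z - f x‖ := by
    rw [setAverage_eq, smul_eq_mul, ← mul_assoc, measureReal_def, hvol]
    rw [mul_inv_cancel₀ (by positivity), one_mul]
  have : ‖∫ t in x..y, (f t - f x)‖ ≤ (2*r) * (c/2) := by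
    calc ‖∫ t in x..y, (f t - f x)‖ ≤ ∫ t in Set.uIoc x y, ‖f t - f x‖ := step1
    _ ≤ ∫ t in Metric.closedBall x r, ‖f t - f x‖ := step2
    _ = (2*r) * ⨍ z in Metric.closedBall x r, ‖f z - f x‖ := step3
    _ ≤ (2*r) * (c/2) := by
        apply mul_le_mul_of_nonneg_left (le_of_lt hAr) (by linarith)
  calc ‖∫ t in x..y, (f t - f x)‖ ≤ (2*r)*(c/2) := this
  _ = c * r := by ring
  _ = c * ‖y - x‖ := by rw [hr, Real.norm_eq_abs]

lemma ld_on (B : ℝ) (f : ℝ → ℝ) (hf : IntegrableOn f (Icc 0 B)) :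
    ∀ᵐ x, x ∈ Ioo 0 B → HasDerivAt (fun y => ∫ t in (0:ℝ)..y, f t) (f x) x := by
  set g : ℝ → ℝ := (Icc 0 B).indicator f with hg
  have hgi : Integrable g := (integrable_indicator_iff measurableSet_Icc).mpr hf
  filter_upwards [ld_aux g hgi] with x hx hxI
  have hfg : g x = f x := indicator_of_mem (Ioo_subset_Icc_self hxI) f
  have hev : (fun y => ∫ t in (0:ℝ)..y, g t) =ᶠ[nhds x] (fun y => ∫ t in (0:ℝ)..y, f t) := by
    filter_upwards [Ioo_mem_nhds hxI.1 hxI.2] with y hy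
    rw [intervalIntegral.integral_of_le (le_of_lt hy.1),
      intervalIntegral.integral_of_le (le_of_lt hy.1), hg,
      integral_indicator measurableSet_Icc, Measure.restrict_restrict measurableSet_Icc]
    congr 1
    rw [Set.inter_eq_right.mpr]
    intro t ht
    exact ⟨le_of_lt ht.1, le_trans ht.2 (le_of_lt hy.2)⟩
  rw [← hfg]
  exact (Filter.EventuallyEq.hasDerivAt_iff hev).mp hx

lemma fub (s : ℝ) (hs : 0 ≤ s) (f g : ℝ → ℝ)
    (hf : IntegrableOn f (Ioc 0 s)) (hg : IntegrableOn g (Ioc 0 s)) :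
    (∫ t in (0:ℝ)..s, f t) * (∫ t in (0:ℝ)..s, g t)
      = (∫ t in (0:ℝ)..s, f t * ∫ r in (0:ℝ)..t, g r)
        + (∫ t in (0:ℝ)..s, g t * ∫ r in (0:ℝ)..t, f r) := by
  set I : Set ℝ := Ioc 0 s with hI
  set μ : Measure ℝ := volume.restrict I with hμ
  have hfi : Integrable f μ := hf
  have hgi : Integrable g μ := hg
  set F : ℝ × ℝ → ℝ := fun p => f p.1 * g p.2 with hF
  have hFi : Integrable F (μ.prod μ) := Integrable.mul_prod hfi hgi
  set S : Set (ℝ × ℝ) := {p : ℝ × ℝ | p.2 < p.1} with hS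
  have hSm : MeasurableSet S := measurableSet_lt measurable_snd measurable_fst
  have hH1 : Integrable (S.indicator F) (μ.prod μ) := hFi.indicator hSm
  have hH2 : Integrable (Sᶜ.indicator F) (μ.prod μ) := hFi.indicator hSm.compl
  have hsplit : (∫ p, F p ∂(μ.prod μ))
      = (∫ p, S.indicator F p ∂(μ.prod μ)) + (∫ p, Sᶜ.indicator F p ∂(μ.prod μ)) := by
    rw [← integral_add hH1 hH2]
    congr 1
    ext p
    simp [Set.indicator_apply]
    by_cases h : p ∈ S <;> simp [h]
  have hLHS : (∫ p, F p ∂(μ.prod μ)) = (∫ t, f t ∂μ) * (∫ t, g t ∂μ) :=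
    integral_prod_mul f g
  -- first piece
  have h1 : (∫ p, S.indicator F p ∂(μ.prod μ))
      = ∫ t, f t * (∫ r in (0:ℝ)..t, g r) ∂μ := by
    rw [integral_prod _ hH1]
    refine setIntegral_congr_fun measurableSet_Ioc (fun t ht => ?_)
    have : (fun r => S.indicator F (t, r)) = (Iio t).indicator (fun r => f t * g r) := by
      ext r
      simp only [Set.indicator_apply, hS, hF, mem_setOf_eq, mem_Iio]
    rw [this, integral_indicator measurableSet_Iio, hμ, Measure.restrict_restrict measurableSet_Iio]
    have hset : Iio t ∩ I = Ioo 0 t := by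
      ext r
      simp only [mem_inter_iff, mem_Iio, hI, mem_Ioc, mem_Ioo]
      constructor
      · rintro ⟨h1, h2, h3⟩; exact ⟨h2, h1⟩
      · rintro ⟨h1, h2⟩; exact ⟨h2, h1, le_trans (le_of_lt h2) ht.2⟩
    rw [hset, MeasureTheory.integral_const_mul, intervalIntegral.integral_of_le (le_of_lt ht.1),
      ← integral_Ioc_eq_integral_Ioo]
  have h2 : (∫ p, Sᶜ.indicator F p ∂(μ.prod μ))
      = ∫ r, g r * (∫ t in (0:ℝ)..r, f t) ∂μ := by
    rw [integral_prod_symm _ hH2]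
    refine setIntegral_congr_fun measurableSet_Ioc (fun r hr => ?_)
    have : (fun t => Sᶜ.indicator F (t, r)) = (Iic r).indicator (fun t => f t * g r) := by
      ext t
      simp only [Set.indicator_apply, hS, hF, mem_compl_iff, mem_setOf_eq, mem_Iic, not_lt]
    rw [this, integral_indicator measurableSet_Iic, hμ, Measure.restrict_restrict measurableSet_Iic]
    have hset : Iic r ∩ I = Ioc 0 r := by
      ext t
      simp only [mem_inter_iff, mem_Iic, hI, mem_Ioc]
      constructor
      · rintro ⟨h1, h2, h3⟩; exact ⟨h2, h1⟩
      · rintro ⟨h1, h2⟩; exact ⟨h2, h1, le_trans h2 hr.2⟩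
    rw [hset, intervalIntegral.integral_of_le (le_of_lt hr.1)]
    rw [MeasureTheory.integral_mul_const]
    ring
  have conv : ∀ h : ℝ → ℝ, (∫ t in (0:ℝ)..s, h t) = ∫ t, h t ∂μ := fun h => by
    rw [intervalIntegral.integral_of_le hs, hμ, hI]
  rw [conv f, conv g, conv (fun t => f t * ∫ r in (0:ℝ)..t, g r),
    conv (fun t => g t * ∫ r in (0:ℝ)..t, f r)]
  rw [← hLHS, hsplit, h1, h2]

lemma prodrule (s : ℝ) (hs : 0 ≤ s) (F G f g : ℝ → ℝ)
    (hf : IntegrableOn f (Ioc 0 s)) (hg : IntegrableOn g (Ioc 0 s))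
    (hF : ∀ x ∈ Icc 0 s, F x = F 0 + ∫ t in (0:ℝ)..x, f t)
    (hG : ∀ x ∈ Icc 0 s, G x = G 0 + ∫ t in (0:ℝ)..x, g t) :
    F s * G s = F 0 * G 0 + ∫ t in (0:ℝ)..s, (f t * G t + F t * g t) := by
  set Pf : ℝ → ℝ := fun t => ∫ r in (0:ℝ)..t, f r with hPf
  set Pg : ℝ → ℝ := fun t => ∫ r in (0:ℝ)..t, g r with hPg
  have hfIcc : IntegrableOn f (Icc 0 s) := (integrableOn_Icc_iff_integrableOn_Ioc).mpr hf
  have hgIcc : IntegrableOn g (Icc 0 s) := (integrableOn_Icc_iff_integrableOn_Ioc).mpr hg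
  have hPfc : ContinuousOn Pf (Icc 0 s) := by
    have := intervalIntegral.continuousOn_primitive_interval (f := f) (a := (0:ℝ)) (b := s)
      (by rwa [uIcc_of_le hs])
    rwa [uIcc_of_le hs] at this
  have hPgc : ContinuousOn Pg (Icc 0 s) := by
    have := intervalIntegral.continuousOn_primitive_interval (f := g) (a := (0:ℝ)) (b := s)
      (by rwa [uIcc_of_le hs])
    rwa [uIcc_of_le hs] at this
  have hfPg : IntegrableOn (fun t => f t * Pg t) (Ioc 0 s) :=
    (hfIcc.mul_continuousOn hPgc isCompact_Icc).mono_set Ioc_subset_Icc_self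
  have hgPf : IntegrableOn (fun t => g t * Pf t) (Ioc 0 s) :=
    (hgIcc.mul_continuousOn hPfc isCompact_Icc).mono_set Ioc_subset_Icc_self
  have int1 : IntegrableOn (fun t => f t * G 0) (Ioc 0 s) := hf.mul_const _
  have int3 : IntegrableOn (fun t => g t * F 0) (Ioc 0 s) := hg.mul_const _
  have key : (∫ t in (0:ℝ)..s, (f t * G t + F t * g t))
      = ((∫ t in (0:ℝ)..s, f t) * G 0 + ∫ t in (0:ℝ)..s, f t * Pg t)
        + ((∫ t in (0:ℝ)..s, g t) * F 0 + ∫ t in (0:ℝ)..s, g t * Pf t) := by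
    simp only [intervalIntegral.integral_of_le hs]
    have e1 : EqOn (fun t => f t * G t + F t * g t)
        (fun t => (f t * G 0 + f t * Pg t) + (g t * F 0 + g t * Pf t)) (Ioc 0 s) := by
      intro t ht
      have h1 := hF t (Ioc_subset_Icc_self ht)
      have h2 := hG t (Ioc_subset_Icc_self ht)
      simp only [h1, h2, hPf, hPg]
      ring
    rw [setIntegral_congr_fun measurableSet_Ioc e1]
    have ia : Integrable (fun t => f t * G 0 + f t * Pg t) (volume.restrict (Ioc 0 s)) :=
      int1.add hfPg
    have ib : Integrable (fun t => g t * F 0 + g t * Pf t) (volume.restrict (Ioc 0 s)) :=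
      int3.add hgPf
    rw [integral_add ia ib, integral_add int1 hfPg, integral_add int3 hgPf,
      MeasureTheory.integral_mul_const, MeasureTheory.integral_mul_const]
  have hfub := fub s hs f g hf hg
  rw [key, hF s ⟨hs, le_refl s⟩, hG s ⟨hs, le_refl s⟩]
  simp only [hPf, hPg] at hfub ⊢
  linear_combination hfub

lemma wron (s : ℝ) (hs : 0 ≤ s) (F G f g : ℝ → ℝ)
    (hfi : IntegrableOn f (Ioc 0 s)) (hgi : IntegrableOn g (Ioc 0 s))
    (hFc : ContinuousOn F (Icc 0 s)) (hGc : ContinuousOn G (Icc 0 s))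
    (hF : ∀ x ∈ Icc 0 s, F x = F 0 + ∫ t in (0:ℝ)..x, f t)
    (hG : ∀ x ∈ Icc 0 s, G x = G 0 + ∫ t in (0:ℝ)..x, g t) :
    F s * (∫ t in (0:ℝ)..s, G t) - G s * (∫ t in (0:ℝ)..s, F t)
      = ∫ t in (0:ℝ)..s, (f t * (∫ r in (0:ℝ)..t, G r) - g t * (∫ r in (0:ℝ)..t, F r)) := by
  have hFIcc : IntegrableOn F (Icc 0 s) := hFc.integrableOn_Icc
  have hGIcc : IntegrableOn G (Icc 0 s) := hGc.integrableOn_Icc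
  have hFIoc : IntegrableOn F (Ioc 0 s) := hFIcc.mono_set Ioc_subset_Icc_self
  have hGIoc : IntegrableOn G (Ioc 0 s) := hGIcc.mono_set Ioc_subset_Icc_self
  set PF : ℝ → ℝ := fun x => ∫ t in (0:ℝ)..x, F t with hPF
  set PG : ℝ → ℝ := fun x => ∫ t in (0:ℝ)..x, G t with hPG
  have hPF0 : PF 0 = 0 := by simp [hPF]
  have hPG0 : PG 0 = 0 := by simp [hPG]
  have hPFrep : ∀ x ∈ Icc 0 s, PF x = PF 0 + ∫ t in (0:ℝ)..x, F t := by
    intro x _; rw [hPF0]; simp [hPF]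
  have hPGrep : ∀ x ∈ Icc 0 s, PG x = PG 0 + ∫ t in (0:ℝ)..x, G t := by
    intro x _; rw [hPG0]; simp [hPG]
  have p1 := prodrule s hs F PG f G hfi hGIoc hF hPGrep
  have p2 := prodrule s hs G PF g F hgi hFIoc hG hPFrep
  rw [hPF0] at p2; rw [hPG0] at p1
  simp only [mul_zero] at p1 p2
  -- continuity of PF PG on Icc
  have hFu : IntegrableOn F (uIcc 0 s) := by rwa [uIcc_of_le hs]
  have hGu : IntegrableOn G (uIcc 0 s) := by rwa [uIcc_of_le hs]
  have hPFc : ContinuousOn PF (Icc 0 s) := by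
    have := intervalIntegral.continuousOn_primitive_interval (μ := volume) hFu
    rwa [uIcc_of_le hs] at this
  have hPGc : ContinuousOn PG (Icc 0 s) := by
    have := intervalIntegral.continuousOn_primitive_interval (μ := volume) hGu
    rwa [uIcc_of_le hs] at this
  have i1 : IntegrableOn (fun t => f t * PG t) (Ioc 0 s) :=
    (((integrableOn_Icc_iff_integrableOn_Ioc).mpr hfi).mul_continuousOn hPGc
      isCompact_Icc).mono_set Ioc_subset_Icc_self
  have i2 : IntegrableOn (fun t => F t * G t) (Ioc 0 s) :=
    ((hFc.mul hGc).integrableOn_Icc).mono_set Ioc_subset_Icc_self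
  have i3 : IntegrableOn (fun t => g t * PF t) (Ioc 0 s) :=
    (((integrableOn_Icc_iff_integrableOn_Ioc).mpr hgi).mul_continuousOn hPFc
      isCompact_Icc).mono_set Ioc_subset_Icc_self
  have i4 : IntegrableOn (fun t => G t * F t) (Ioc 0 s) :=
    ((hGc.mul hFc).integrableOn_Icc).mono_set Ioc_subset_Icc_self
  have split1 : (∫ t in (0:ℝ)..s, (f t * PG t + F t * G t))
      = (∫ t in (0:ℝ)..s, f t * PG t) + ∫ t in (0:ℝ)..s, F t * G t := by
    simp only [intervalIntegral.integral_of_le hs]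
    exact integral_add i1 i2
  have split2 : (∫ t in (0:ℝ)..s, (g t * PF t + G t * F t))
      = (∫ t in (0:ℝ)..s, g t * PF t) + ∫ t in (0:ℝ)..s, G t * F t := by
    simp only [intervalIntegral.integral_of_le hs]
    exact integral_add i3 i4
  have split3 : (∫ t in (0:ℝ)..s, (f t * PG t - g t * PF t))
      = (∫ t in (0:ℝ)..s, f t * PG t) - ∫ t in (0:ℝ)..s, g t * PF t := by
    simp only [intervalIntegral.integral_of_le hs]
    exact integral_sub i1 i3
  have hcomm : (∫ t in (0:ℝ)..s, F t * G t) = ∫ t in (0:ℝ)..s, G t * F t := by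
    congr 1; ext t; ring
  rw [split1] at p1; rw [split2] at p2
  calc F s * PG s - G s * PF s
      = (∫ t in (0:ℝ)..s, f t * PG t) - ∫ t in (0:ℝ)..s, g t * PF t := by
        rw [p1, p2, hcomm]; ring
    _ = ∫ t in (0:ℝ)..s, (f t * PG t - g t * PF t) := split3.symm

/-- Chiti comparison lemma (Lemma 3.1): with `u*` the decreasing rearrangement of the
first Dirichlet eigenfunction of `D ⊂ M` (`Ric(M) ≥ n-1`), satisfying the
integro-differential *inequality*, and `v*` the rearranged radial first eigenfunction
of the ball `B_{θ₁(λ)} ⊂ Sⁿ` with the same eigenvalue `λ`, satisfying the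
corresponding *equality*, normalized by `v*(0) = u*(0)`: then `u* ≥ v*` on `[0, A(θ₁)]`.
`λ` is the first Dirichlet eigenvalue of `B_{θ₁}`, encoded by minimality and
simplicity of the Rayleigh quotient written in the variable `s = A(θ)`. -/
theorem stmt9 (n : ℕ) (hn : 2 ≤ n) (β ω θ₁ lam : ℝ) (hβ : 0 < β) (hω : 0 < ω)
    (hlam : 0 < lam) (hθ₁ : θ₁ ∈ Ioo 0 Real.pi)
    (L VolD : ℝ) (hL : L = β * ω * ∫ τ in (0:ℝ)..θ₁, Real.sin τ ^ (n-1))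
    (hLV : L ≤ VolD)  -- `Vol(D) ≥ A(θ₁)` (the "claim")
    (Θ : ℝ → ℝ) (hΘ : ∀ s ∈ Icc (0:ℝ) L, β * ω * ∫ τ in (0:ℝ)..(Θ s), Real.sin τ ^ (n-1) = s)
    (ustar : ℝ → ℝ) (hus_ac : ACOn ustar 0 VolD) (hus_mono : AntitoneOn ustar (Icc 0 VolD))
    (hus_pos : ∀ s ∈ Ico (0:ℝ) VolD, 0 < ustar s)
    -- the integro-differential inequality satisfied by `u*`:
    (hu : ∀ᵐ s ∂(volume.restrict (Ioo 0 L)),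
      -deriv ustar s ≤ lam / ((β * ω) ^ 2 * Real.sin (Θ s) ^ (2 * n - 2)) * ∫ ξ in (0:ℝ)..s, ustar ξ)
    (vstar : ℝ → ℝ) (hvs_ac : ACOn vstar 0 L) (hvs_mono : AntitoneOn vstar (Icc 0 L))
    (hvs_pos : ∀ s ∈ Ico (0:ℝ) L, 0 < vstar s) (hvs_bd : vstar L = 0)
    -- the corresponding equality satisfied by `v*`:
    (hv : ∀ s ∈ Ioc (0:ℝ) L,
      HasDerivWithinAt vstar
        (-(lam / ((β * ω) ^ 2 * Real.sin (Θ s) ^ (2 * n - 2)) * ∫ ξ in (0:ℝ)..s, vstar ξ))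
        (Icc 0 L) s)
    -- `λ` is the first Dirichlet eigenvalue of `B_{θ₁}` (variational characterization):
    (hmin : ∀ φ : ℝ → ℝ, ACOn φ 0 L → φ L = 0 → (∃ s ∈ Icc (0:ℝ) L, φ s ≠ 0) →
      lam * ∫ s in (0:ℝ)..L, (φ s) ^ 2
        ≤ β ^ 2 * ω * ∫ s in (0:ℝ)..L, (deriv φ s) ^ 2 * Real.sin (Θ s) ^ (2 * n - 2))
    -- … and it is simple, with eigenfunction `v*`:
    (hsimple : ∀ φ : ℝ → ℝ, ACOn φ 0 L → φ L = 0 →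
      lam * ∫ s in (0:ℝ)..L, (φ s) ^ 2
        = β ^ 2 * ω * ∫ s in (0:ℝ)..L, (deriv φ s) ^ 2 * Real.sin (Θ s) ^ (2 * n - 2) →
      ∃ c : ℝ, ∀ s ∈ Icc (0:ℝ) L, φ s = c * vstar s)
    -- normalization:
    (hnorm : vstar 0 = ustar 0) :
    ∀ s ∈ Icc (0:ℝ) L, vstar s ≤ ustar s := by
  obtain ⟨fu, hfu_int, hfu_rep⟩ := hus_ac
  obtain ⟨fv, hfv_int, hfv_rep⟩ := hvs_ac
  by_contra hcon
  push_neg at hcon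
  obtain ⟨s₂, hs₂mem, hs₂⟩ := hcon
  have hs₂0 : 0 < s₂ := by
    rcases lt_or_eq_of_le hs₂mem.1 with h | h
    · exact h
    · exfalso; rw [← h, hnorm] at hs₂; exact lt_irrefl _ hs₂
  have hL0 : 0 < L := lt_of_lt_of_le hs₂0 hs₂mem.2
  have hVD0 : 0 < VolD := lt_of_lt_of_le hL0 hLV
  -- continuity of ustar, vstar
  have hus_cont : ContinuousOn ustar (Icc 0 VolD) := by
    have h1 : IntegrableOn fu (uIcc 0 VolD) := by rwa [uIcc_of_le (le_of_lt hVD0)]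
    have h2 := intervalIntegral.continuousOn_primitive_interval (μ := volume) h1
    rw [uIcc_of_le (le_of_lt hVD0)] at h2
    exact (continuousOn_const.add h2).congr hfu_rep
  have hvs_cont : ContinuousOn vstar (Icc 0 L) := by
    have h1 : IntegrableOn fv (uIcc 0 L) := by rwa [uIcc_of_le (le_of_lt hL0)]
    have h2 := intervalIntegral.continuousOn_primitive_interval (μ := volume) h1
    rw [uIcc_of_le (le_of_lt hL0)] at h2
    exact (continuousOn_const.add h2).congr hfv_rep
  have hus_contL : ContinuousOn ustar (Icc 0 L) :=
    hus_cont.mono (Icc_subset_Icc (le_refl 0) hLV)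
  -- abbreviations
  set U : ℝ → ℝ := fun x => ∫ t in (0:ℝ)..x, ustar t with hUdef
  set V : ℝ → ℝ := fun x => ∫ t in (0:ℝ)..x, vstar t with hVdef
  -- nonnegativity of vstar and V
  have hvnn : ∀ y ∈ Icc (0:ℝ) L, 0 ≤ vstar y := by
    intro y hy
    rcases lt_or_eq_of_le hy.2 with h | h
    · exact le_of_lt (hvs_pos y ⟨hy.1, h⟩)
    · rw [h, hvs_bd]
  have hVnn : ∀ x ∈ Icc (0:ℝ) L, 0 ≤ V x := by
    intro x hx
    exact intervalIntegral.integral_nonneg hx.1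
      (fun t ht => hvnn t ⟨ht.1, le_trans ht.2 hx.2⟩)
  have hVpos : ∀ x ∈ Ioc (0:ℝ) L, 0 < V x := by
    intro x hx
    apply intervalIntegral.intervalIntegral_pos_of_pos_on
    · apply ContinuousOn.intervalIntegrable
      rw [uIcc_of_le (le_of_lt hx.1)]
      exact hvs_cont.mono (Icc_subset_Icc (le_refl 0) hx.2)
    · exact fun t ht => hvs_pos t ⟨le_of_lt ht.1, lt_of_lt_of_le ht.2 hx.2⟩
    · exact hx.1
  -- a.e. identity for fv
  have hfv_eq : ∀ᵐ x, x ∈ Ioo (0:ℝ) L →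
      fv x = -(lam / ((β * ω) ^ 2 * Real.sin (Θ x) ^ (2 * n - 2)) * V x) := by
    filter_upwards [ld_on L fv hfv_int] with x hx hxI
    have hprim : HasDerivAt (fun y => ∫ t in (0:ℝ)..y, fv t) (fv x) x := hx hxI
    have h1 : HasDerivAt vstar (fv x) x := by
      have hsum := (hasDerivAt_const x (vstar 0)).add hprim
      rw [zero_add] at hsum
      apply HasDerivAt.congr_of_eventuallyEq hsum
      filter_upwards [Icc_mem_nhds hxI.1 hxI.2] with y hy
      exact hfv_rep y hy
    have h2 : HasDerivAt vstar
        (-(lam / ((β * ω) ^ 2 * Real.sin (Θ x) ^ (2 * n - 2)) * V x)) x :=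
      (hv x ⟨hxI.1, le_of_lt hxI.2⟩).hasDerivAt (Icc_mem_nhds hxI.1 hxI.2)
    exact h1.unique h2
  -- a.e. derivative of ustar
  have hderiv_u : ∀ᵐ x, x ∈ Ioo (0:ℝ) L → deriv ustar x = fu x := by
    filter_upwards [ld_on VolD fu hfu_int] with x hx hxI
    have hxI' : x ∈ Ioo (0:ℝ) VolD := ⟨hxI.1, lt_of_lt_of_le hxI.2 hLV⟩
    have hprim : HasDerivAt (fun y => ∫ t in (0:ℝ)..y, fu t) (fu x) x := hx hxI'
    have h1 : HasDerivAt ustar (fu x) x := by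
      have hsum := (hasDerivAt_const x (ustar 0)).add hprim
      rw [zero_add] at hsum
      apply HasDerivAt.congr_of_eventuallyEq hsum
      filter_upwards [Icc_mem_nhds hxI'.1 hxI'.2] with y hy
      exact hfu_rep y hy
    exact h1.deriv
  have hfu_ge : ∀ᵐ x, x ∈ Ioo (0:ℝ) L →
      0 ≤ fu x + lam / ((β * ω) ^ 2 * Real.sin (Θ x) ^ (2 * n - 2)) * U x := by
    filter_upwards [hderiv_u, ae_imp_of_ae_restrict hu] with x h1 h2 hxI
    have h3 := h2 hxI
    rw [h1 hxI] at h3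
    have : lam / ((β * ω) ^ 2 * Real.sin (Θ x) ^ (2 * n - 2)) * (∫ ξ in (0:ℝ)..x, ustar ξ)
        = lam / ((β * ω) ^ 2 * Real.sin (Θ x) ^ (2 * n - 2)) * U x := rfl
    rw [this] at h3
    linarith
  -- integrability of densities on (0, L]
  have hfuL : IntegrableOn fu (Ioc 0 L) :=
    hfu_int.mono_set (fun t ht => ⟨le_of_lt ht.1, le_trans ht.2 hLV⟩)
  have hfvL : IntegrableOn fv (Ioc 0 L) := hfv_int.mono_set Ioc_subset_Icc_self
  -- the Wronskian-type identity
  have hEid : ∀ x ∈ Icc (0:ℝ) L, ustar x * V x - vstar x * U x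
      = ∫ t in (0:ℝ)..x, (fu t * V t - fv t * U t) := by
    intro x hx
    have hIccx : Icc (0:ℝ) x ⊆ Icc 0 L := Icc_subset_Icc (le_refl 0) hx.2
    exact wron x hx.1 ustar vstar fu fv
      (hfuL.mono_set (Ioc_subset_Ioc (le_refl 0) hx.2))
      (hfvL.mono_set (Ioc_subset_Ioc (le_refl 0) hx.2))
      (hus_contL.mono hIccx) (hvs_cont.mono hIccx)
      (fun y hy => hfu_rep y ⟨hy.1, le_trans hy.2 (le_trans hx.2 hLV)⟩)
      (fun y hy => hfv_rep y (hIccx hy))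
  -- E is nonnegative
  have hneL : ∀ᵐ (t : ℝ), t ≠ L := by
    refine ae_iff.mpr ?_
    simpa using measure_singleton L
  have hE : ∀ x ∈ Icc (0:ℝ) L, 0 ≤ ustar x * V x - vstar x * U x := by
    intro x hx
    rw [hEid x hx, intervalIntegral.integral_of_le hx.1]
    have haen : ∀ᵐ t, t ∈ Ioo (0:ℝ) L → 0 ≤ fu t * V t - fv t * U t := by
      filter_upwards [hfv_eq, hfu_ge] with t h1 h2 ht
      have e1 := h1 ht
      have e2 := h2 ht
      have hVt : 0 ≤ V t := hVnn t (Ioo_subset_Icc_self ht)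
      rw [e1]
      nlinarith [mul_nonneg hVt e2]
    apply integral_nonneg_of_ae
    filter_upwards [ae_restrict_of_ae haen, ae_restrict_of_ae hneL,
      ae_restrict_mem measurableSet_Ioc] with t h1 h2 h3
    exact h1 ⟨h3.1, lt_of_le_of_ne (le_trans h3.2 hx.2) h2⟩
  -- derivatives of U and V
  have hUderiv : ∀ x ∈ Ioo (0:ℝ) L, HasDerivAt U (ustar x) x := by
    intro x hx
    have hxV : x ∈ Ioo (0:ℝ) VolD := ⟨hx.1, lt_of_lt_of_le hx.2 hLV⟩
    apply intervalIntegral.integral_hasDerivAt_right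
    · apply ContinuousOn.intervalIntegrable
      rw [uIcc_of_le (le_of_lt hx.1)]
      exact hus_cont.mono (Icc_subset_Icc (le_refl 0) (le_of_lt hxV.2))
    · exact ⟨Ioo 0 VolD, Ioo_mem_nhds hxV.1 hxV.2,
        (hus_cont.mono Ioo_subset_Icc_self).aestronglyMeasurable measurableSet_Ioo⟩
    · exact hus_cont.continuousAt (Icc_mem_nhds hxV.1 hxV.2)
  have hVderiv : ∀ x ∈ Ioo (0:ℝ) L, HasDerivAt V (vstar x) x := by
    intro x hx
    apply intervalIntegral.integral_hasDerivAt_right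
    · apply ContinuousOn.intervalIntegrable
      rw [uIcc_of_le (le_of_lt hx.1)]
      exact hvs_cont.mono (Icc_subset_Icc (le_refl 0) (le_of_lt hx.2))
    · exact ⟨Ioo 0 L, Ioo_mem_nhds hx.1 hx.2,
        (hvs_cont.mono Ioo_subset_Icc_self).aestronglyMeasurable measurableSet_Ioo⟩
    · exact hvs_cont.continuousAt (Icc_mem_nhds hx.1 hx.2)
  -- the ratio function
  set R : ℝ → ℝ := fun x => (U x - V x) / V x with hRdef
  have hUc : ContinuousOn U (Icc 0 L) := by
    have h1 : IntegrableOn ustar (uIcc 0 L) := by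
      rw [uIcc_of_le (le_of_lt hL0)]; exact hus_contL.integrableOn_Icc
    have h2 := intervalIntegral.continuousOn_primitive_interval (μ := volume) h1
    rwa [uIcc_of_le (le_of_lt hL0)] at h2
  have hVc : ContinuousOn V (Icc 0 L) := by
    have h1 : IntegrableOn vstar (uIcc 0 L) := by
      rw [uIcc_of_le (le_of_lt hL0)]; exact hvs_cont.integrableOn_Icc
    have h2 := intervalIntegral.continuousOn_primitive_interval (μ := volume) h1
    rwa [uIcc_of_le (le_of_lt hL0)] at h2
  have hRcont : ContinuousOn R (Ioc 0 L) :=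
    ((hUc.mono Ioc_subset_Icc_self).sub (hVc.mono Ioc_subset_Icc_self)).div
      (hVc.mono Ioc_subset_Icc_self) (fun x hx => ne_of_gt (hVpos x hx))
  have hRderiv : ∀ x ∈ Ioo (0:ℝ) L,
      HasDerivAt R ((ustar x * V x - vstar x * U x) / V x ^ 2) x := by
    intro x hx
    have h1 := (hUderiv x hx).sub (hVderiv x hx)
    have h2 := hVderiv x hx
    have hVne : V x ≠ 0 := ne_of_gt (hVpos x ⟨hx.1, le_of_lt hx.2⟩)
    have h3 := h1.div h2 hVne
    have heq : (ustar x * V x - vstar x * U x)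
        = ((ustar x - vstar x) * V x - (U x - V x) * vstar x) := by ring
    rw [heq]
    exact h3
  have hRmono : MonotoneOn R (Ioc 0 L) := by
    apply monotoneOn_of_deriv_nonneg (convex_Ioc 0 L) hRcont
    · intro x hx
      rw [interior_Ioc] at hx
      exact (hRderiv x hx).differentiableAt.differentiableWithinAt
    · intro x hx
      rw [interior_Ioc] at hx
      rw [(hRderiv x hx).deriv]
      exact div_nonneg (hE x (Ioo_subset_Icc_self hx)) (sq_nonneg _)
  -- q is nonnegative on (0, L]
  have hqnn : ∀ x ∈ Ioc (0:ℝ) L, 0 ≤ U x - V x := by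
    intro x hx
    have hv0 : 0 < vstar 0 := hvs_pos 0 ⟨le_refl 0, hL0⟩
    have hRx : 0 ≤ R x := by
      have key : ∀ ε > (0:ℝ), -ε ≤ R x := by
        intro ε hε
        set ε' : ℝ := ε * vstar 0 / 2 with hε'def
        have hε' : 0 < ε' := by positivity
        have h0mem : (0:ℝ) ∈ Icc (0:ℝ) L := ⟨le_refl 0, le_of_lt hL0⟩
        have hwc : ContinuousWithinAt (fun t => ustar t - vstar t) (Icc 0 L) 0 :=
          (hus_contL.sub hvs_cont).continuousWithinAt h0mem
        have hvc : ContinuousWithinAt vstar (Icc 0 L) 0 := hvs_cont.continuousWithinAt h0mem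
        have h00 : ustar 0 - vstar 0 = 0 := by rw [hnorm]; ring
        have ev1 : ∀ᶠ t in nhdsWithin 0 (Icc 0 L), |ustar t - vstar t| < ε' := by
          have hball : ∀ᶠ y in nhds (ustar 0 - vstar 0), |y| < ε' := by
            rw [h00]
            filter_upwards [Metric.ball_mem_nhds (0:ℝ) hε'] with y hy
            simpa [Real.dist_eq] using hy
          exact hwc.eventually hball
        have ev2 : ∀ᶠ t in nhdsWithin 0 (Icc 0 L), vstar 0 / 2 < vstar t := by
          have hball : ∀ᶠ y in nhds (vstar 0), vstar 0 / 2 < y := by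
            filter_upwards [Ioi_mem_nhds (half_lt_self hv0)] with y hy
            exact hy
          exact hvc.eventually hball
        obtain ⟨δ, hδ0, hδ⟩ := Metric.mem_nhdsWithin_iff.mp (ev1.and ev2)
        set z : ℝ := min x (δ/2) with hzdef
        have hz0 : 0 < z := lt_min hx.1 (by positivity)
        have hzx : z ≤ x := min_le_left _ _
        have hzL : z ∈ Ioc (0:ℝ) L := ⟨hz0, le_trans hzx hx.2⟩
        have hbd : ∀ t ∈ Ioc (0:ℝ) z, |ustar t - vstar t| < ε' ∧ vstar 0/2 < vstar t := by
          intro t ht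
          apply hδ
          constructor
          · rw [Metric.mem_ball, Real.dist_eq, sub_zero, abs_of_pos ht.1]
            have : z ≤ δ/2 := min_le_right _ _
            linarith [ht.2]
          · exact ⟨le_of_lt ht.1, le_trans ht.2 hzL.2⟩
        have hintu : IntervalIntegrable ustar volume 0 z := by
          apply ContinuousOn.intervalIntegrable
          rw [uIcc_of_le (le_of_lt hz0)]
          exact hus_contL.mono (Icc_subset_Icc (le_refl 0) hzL.2)
        have hintv : IntervalIntegrable vstar volume 0 z := by
          apply ContinuousOn.intervalIntegrable
          rw [uIcc_of_le (le_of_lt hz0)]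
          exact hvs_cont.mono (Icc_subset_Icc (le_refl 0) hzL.2)
        have hqz : -(ε' * z) ≤ U z - V z := by
          have hiq : U z - V z = ∫ t in (0:ℝ)..z, (ustar t - vstar t) :=
            (intervalIntegral.integral_sub hintu hintv).symm
          rw [hiq]
          have habs : ‖∫ t in (0:ℝ)..z, (ustar t - vstar t)‖ ≤ ε' * |z - 0| := by
            apply intervalIntegral.norm_integral_le_of_norm_le_const
            intro t ht
            rw [uIoc_of_le (le_of_lt hz0)] at ht
            rw [Real.norm_eq_abs]
            exact le_of_lt (hbd t ht).1
          rw [sub_zero, abs_of_pos hz0, Real.norm_eq_abs] at habs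
          have h5 := neg_abs_le (∫ t in (0:ℝ)..z, (ustar t - vstar t))
          linarith
        have hVz : vstar 0 / 2 * z ≤ V z := by
          have h6 : (∫ t in (0:ℝ)..z, (fun _ => vstar 0 / 2) t) ≤ ∫ t in (0:ℝ)..z, vstar t := by
            apply intervalIntegral.integral_mono_on (le_of_lt hz0) intervalIntegrable_const hintv
            intro t ht
            rcases eq_or_lt_of_le ht.1 with h | h
            · rw [← h]; linarith
            · exact le_of_lt (hbd t ⟨h, ht.2⟩).2
          rw [intervalIntegral.integral_const, sub_zero, smul_eq_mul, mul_comm] at h6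
          exact h6
        have hVzpos := hVpos z hzL
        have hmon : R z ≤ R x := hRmono hzL hx hzx
        have hRz : -ε ≤ R z := by
          have hR : R z = (U z - V z) / V z := rfl
          rw [hR, le_div_iff₀ hVzpos]
          have h1 : -ε * V z ≤ -ε * (vstar 0 / 2 * z) :=
            mul_le_mul_of_nonpos_left hVz (by linarith)
          calc -ε * V z ≤ -ε * (vstar 0 / 2 * z) := h1
            _ = -(ε' * z) := by rw [hε'def]; ring
            _ ≤ U z - V z := hqz
        linarith
      by_contra hneg
      push_neg at hneg
      have := key (-(R x)/2) (by linarith)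
      linarith
    have h7 := mul_nonneg hRx (le_of_lt (hVpos x hx))
    have h8 : R x * V x = U x - V x := by
      have hR : R x = (U x - V x) / V x := rfl
      rw [hR, div_mul_cancel₀ _ (ne_of_gt (hVpos x hx))]
    rwa [h8] at h7
  -- final contradiction
  have hfin1 := hE s₂ hs₂mem
  have hfin2 := hqnn s₂ ⟨hs₂0, hs₂mem.2⟩
  have hfin3 := hVpos s₂ ⟨hs₂0, hs₂mem.2⟩
  have hfin4 := hvnn s₂ hs₂mem
  nlinarith [mul_pos (sub_pos.mpr hs₂) hfin3, mul_nonneg hfin4 hfin2]
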